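/- Assuming that every odd integer n ≥ 9 can be written as n = 1 + p + q with p, q distinct primes, 5 is the only odd untouchable number: for every odd n ≠ 5 there exists m with s(m) = n. -/
import Mathlib


/-- Sum of proper divisors. -/
def s (n : ℕ) : ℕ := ArithmeticFunction.sigma 1 n - n

lemma s_pq (p q : ℕ) (hp : p.Prime) (hq : q.Prime) (hne : p ≠ q) :
    s (p * q) = 1 + p + q := by
  have hco : Nat.Coprime p q := (Nat.coprime_primes hp hq).mpr hne
  have hσ : ArithmeticFunction.sigma 1 (p * q) = (1 + p) * (1 + q) := by
    rw [ArithmeticFunction.isMultiplicative_sigma.map_mul_of_coprime hco]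
    rw [ArithmeticFunction.sigma_one_apply, ArithmeticFunction.sigma_one_apply,
      hp.divisors, hq.divisors]
    rw [Finset.sum_pair hp.one_lt.ne, Finset.sum_pair hq.one_lt.ne]
  unfold s
  rw [hσ]
  ring_nf
  omega

theorem five_only_odd_untouchable
    (goldbach : ∀ n : ℕ, Odd n → 9 ≤ n →
      ∃ p q : ℕ, p.Prime ∧ q.Prime ∧ p ≠ q ∧ n = 1 + p + q) :
    ∀ n : ℕ, Odd n → n ≠ 5 → ∃ m : ℕ, s m = n := by
  intro n hodd hne
  by_cases h9 : 9 ≤ n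
  · obtain ⟨p, q, hp, hq, hpq, heq⟩ := goldbach n hodd h9
    exact ⟨p * q, by rw [s_pq p q hp hq hpq]; omega⟩
  · have h2 : s 2 = 1 := by rw [s, ArithmeticFunction.sigma_one_apply]; decide
    have h4 : s 4 = 3 := by rw [s, ArithmeticFunction.sigma_one_apply]; decide
    have h8 : s 8 = 7 := by rw [s, ArithmeticFunction.sigma_one_apply]; decide
    interval_cases n
    · exact absurd hodd (by decide)
    · exact ⟨2, h2⟩
    · exact absurd hodd (by decide)
    · exact ⟨4, h4⟩
    · exact absurd hodd (by decide)
    · exact absurd rfl hne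
    · exact absurd hodd (by decide)
    · exact ⟨8, h8⟩
    · exact absurd hodd (by decide)
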